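/- Let {x_k} be generated by the TRFD algorithm and suppose T ≥ 2 satisfies ψ_{p,Δ_*}(x_k) > ε for k = 0,...,T−1 (equivalently, 2 ≤ T ≤ T_g(ε)). Then the number of iterations of types U¹ and U³ among {0,...,T−1} satisfies |(U¹ ∪ U³) ∩ {0,...,T−1}| ≤ ⌈|log₂(τ_0 √n / Δ_min(ε))|⌉, where Δ_min(ε) := (1−α)θε / (4 L_{h,p} max{σ, L_J} c_{p,2}(m) c_{2,p}(n)²). -/

import Mathlib

open scoped ENNReal

noncomputable section

/-- The `p`-norm on `ℝ^n`, for `p ∈ [1,∞]`. -/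
def pNorm (p : ℝ≥0∞) {n : ℕ} (x : Fin n → ℝ) : ℝ :=
  if p = ∞ then ⨆ i, |x i| else (∑ i, |x i| ^ p.toReal) ^ (1 / p.toReal)

/-- The Euclidean norm on `ℝ^n`. -/
def eucNorm {n : ℕ} (x : Fin n → ℝ) : ℝ := Real.sqrt (∑ i, x i ^ 2)

/-- The operator norm of a matrix, induced by Euclidean norms. -/
def opNorm2 {m n : ℕ} (A : Matrix (Fin m) (Fin n) ℝ) : ℝ :=
  sSup ((fun v => eucNorm (A.mulVec v)) '' {v | eucNorm v ≤ 1})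

/-- Forward finite-difference approximation of the Jacobian of `F` at `x` with stepsize `τ`:
the `j`-th column is `(F (x + τ e_j) - F x) / τ`. -/
def fdMatrix {n m : ℕ} (F : (Fin n → ℝ) → (Fin m → ℝ)) (x : Fin n → ℝ) (τ : ℝ) :
    Matrix (Fin m) (Fin n) ℝ :=
  Matrix.of fun i j => (F (x + Pi.single j τ) i - F x i) / τ

/-- Stationarity measure `ψ_{p,r}(x)`. -/
def psi {n m : ℕ} (Ω : Set (Fin n → ℝ)) (F : (Fin n → ℝ) → (Fin m → ℝ))
    (h : (Fin m → ℝ) → ℝ) (J : (Fin n → ℝ) → Matrix (Fin m) (Fin n) ℝ)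
    (p : ℝ≥0∞) (r : ℝ) (x : Fin n → ℝ) : ℝ :=
  r⁻¹ * (h (F x) -
    sInf ((fun s => h (F x + (J x).mulVec s)) '' {s | x + s ∈ Ω ∧ pNorm p s ≤ r}))

/-- Approximate stationarity measure `η_{p,r}(x; A)`. -/
def eta {n m : ℕ} (Ω : Set (Fin n → ℝ)) (F : (Fin n → ℝ) → (Fin m → ℝ))
    (h : (Fin m → ℝ) → ℝ) (p : ℝ≥0∞) (r : ℝ) (x : Fin n → ℝ)
    (A : Matrix (Fin m) (Fin n) ℝ) : ℝ :=
  r⁻¹ * (h (F x) -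
    sInf ((fun s => h (F x + A.mulVec s)) '' {s | x + s ∈ Ω ∧ pNorm p s ≤ r}))

/-- The TRFD algorithm: `x`, `τ`, `Δ`, `A`, `d`, `ρ` are the iterates, finite-difference
stepsizes, trust-region radii, finite-difference Jacobian approximations, trial steps and
ratios generated by TRFD with parameters `ε, σ, α, θ, Δstar` from the point `x 0`. -/
def TRFDrun {n m : ℕ} (Ω : Set (Fin n → ℝ)) (F : (Fin n → ℝ) → (Fin m → ℝ))
    (h : (Fin m → ℝ) → ℝ) (p : ℝ≥0∞)
    (Lh cpm cnp ε σ α θ Δstar : ℝ)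
    (x : ℕ → Fin n → ℝ) (τ Δ : ℕ → ℝ) (A : ℕ → Matrix (Fin m) (Fin n) ℝ)
    (d : ℕ → Fin n → ℝ) (ρ : ℕ → ℝ) : Prop :=
  x 0 ∈ Ω ∧
  τ 0 = ε / (Lh * σ * cpm * cnp * Real.sqrt n) ∧
  τ 0 * Real.sqrt n ≤ Δ 0 ∧ Δ 0 ≤ Δstar ∧
  (∀ k, A k = fdMatrix F (x k) (τ k)) ∧
  (∀ k,
    -- unsuccessful iteration of type I
    (eta Ω F h p Δstar (x k) (A k) < ε / 2 ∧
      x (k + 1) = x k ∧ Δ (k + 1) = Δ k ∧ τ (k + 1) = τ k / 2) ∨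
    (ε / 2 ≤ eta Ω F h p Δstar (x k) (A k) ∧
      -- the trial step is feasible and achieves a `θ`-fraction of the optimal model decrease
      pNorm p (d k) ≤ Δ k ∧ x k + d k ∈ Ω ∧
      θ * (h (F (x k)) -
          sInf ((fun s => h (F (x k) + (A k).mulVec s)) ''
            {s | x k + s ∈ Ω ∧ pNorm p s ≤ Δ k})) ≤
        h (F (x k)) - h (F (x k) + (A k).mulVec (d k)) ∧
      ρ k = (h (F (x k)) - h (F (x k + d k))) /
            (h (F (x k)) - h (F (x k) + (A k).mulVec (d k))) ∧
      -- successful iteration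
      ((α ≤ ρ k ∧ x (k + 1) = x k + d k ∧ Δ (k + 1) = min (2 * Δ k) Δstar ∧
          τ (k + 1) = τ k) ∨
      -- unsuccessful iteration of type II
       (ρ k < α ∧ τ k * Real.sqrt n ≤ Δ k / 2 ∧
          x (k + 1) = x k ∧ Δ (k + 1) = Δ k / 2 ∧ τ (k + 1) = τ k) ∨
      -- unsuccessful iteration of type III
       (ρ k < α ∧ Δ k / 2 < τ k * Real.sqrt n ∧
          x (k + 1) = x k ∧ Δ (k + 1) = Δ k / 2 ∧ τ (k + 1) = τ k / 2))))

section TRFDAux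

lemma eucNorm_eq_norm {k : ℕ} (x : Fin k → ℝ) :
    eucNorm x = ‖(EuclideanSpace.equiv (Fin k) ℝ).symm x‖ := by
  rw [EuclideanSpace.norm_eq]
  simp [eucNorm, sq_abs]

lemma eucNorm_nonneg {k : ℕ} (x : Fin k → ℝ) : 0 ≤ eucNorm x := Real.sqrt_nonneg _

lemma eucNorm_add_le {k : ℕ} (x y : Fin k → ℝ) :
    eucNorm (x + y) ≤ eucNorm x + eucNorm y := by
  simp only [eucNorm_eq_norm, map_add]; exact norm_add_le _ _

lemma eucNorm_smul {k : ℕ} (c : ℝ) (x : Fin k → ℝ) :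
    eucNorm (c • x) = |c| * eucNorm x := by
  simp only [eucNorm_eq_norm, map_smul, norm_smul, Real.norm_eq_abs]

lemma eucNorm_eq_zero {k : ℕ} {x : Fin k → ℝ} (h : eucNorm x = 0) : x = 0 := by
  rw [eucNorm_eq_norm, norm_eq_zero] at h
  simpa using congrArg (EuclideanSpace.equiv (Fin k) ℝ) h

lemma pi_norm_le_eucNorm {k : ℕ} (x : Fin k → ℝ) : ‖x‖ ≤ eucNorm x := by
  rcases Nat.eq_zero_or_pos k with hk | hk
  · subst hk; simp [eucNorm, Subsingleton.elim x 0]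
  · apply pi_norm_le_iff_of_nonneg (eucNorm_nonneg x) |>.2
    intro i
    rw [Real.norm_eq_abs, eucNorm, ← Real.sqrt_sq_eq_abs]
    exact Real.sqrt_le_sqrt (Finset.single_le_sum (f := fun i => x i ^ 2)
      (fun i _ => sq_nonneg _) (Finset.mem_univ i))


/-- Frobenius norm of a matrix. -/
def frob {m n : ℕ} (A : Matrix (Fin m) (Fin n) ℝ) : ℝ := Real.sqrt (∑ i, ∑ j, A i j ^ 2)

lemma frob_nonneg {m n : ℕ} (A : Matrix (Fin m) (Fin n) ℝ) : 0 ≤ frob A := Real.sqrt_nonneg _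

lemma eucNorm_mulVec_le_frob {m n : ℕ} (A : Matrix (Fin m) (Fin n) ℝ) (v : Fin n → ℝ) :
    eucNorm (A.mulVec v) ≤ frob A * eucNorm v := by
  rw [eucNorm, frob, eucNorm, ← Real.sqrt_mul (by positivity)]
  apply Real.sqrt_le_sqrt
  rw [Finset.sum_mul]
  apply Finset.sum_le_sum
  intro i _
  calc (A.mulVec v i) ^ 2 = (∑ j, A i j * v j) ^ 2 := by
        rfl
    _ ≤ (∑ j, A i j ^ 2) * ∑ j, v j ^ 2 :=
        Finset.sum_mul_sq_le_sq_mul_sq _ _ _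

lemma eucNorm_mulVec_le_opNorm2 {m n : ℕ} (A : Matrix (Fin m) (Fin n) ℝ) (v : Fin n → ℝ) :
    eucNorm (A.mulVec v) ≤ opNorm2 A * eucNorm v := by
  have hbdd : BddAbove ((fun v => eucNorm (A.mulVec v)) '' {v | eucNorm v ≤ 1}) := by
    refine ⟨frob A, ?_⟩
    rintro t ⟨w, hw, rfl⟩
    calc eucNorm (A.mulVec w) ≤ frob A * eucNorm w := eucNorm_mulVec_le_frob A w
      _ ≤ frob A * 1 := by
          exact mul_le_mul_of_nonneg_left hw (frob_nonneg A)
      _ = frob A := mul_one _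
  rcases eq_or_lt_of_le (eucNorm_nonneg v) with h0 | h0
  · have hv : v = 0 := eucNorm_eq_zero h0.symm
    subst hv
    have h1 : A.mulVec 0 = 0 := Matrix.mulVec_zero A
    rw [h1, ← h0, mul_zero]
    simp [eucNorm]
  · set c := (eucNorm v)⁻¹ with hc
    have hu : eucNorm (c • v) = 1 := by
      rw [eucNorm_smul, abs_of_pos (inv_pos.2 h0)]
      field_simp
    have hmem : eucNorm (A.mulVec (c • v)) ∈
        (fun v => eucNorm (A.mulVec v)) '' {v | eucNorm v ≤ 1} :=
      ⟨c • v, le_of_eq hu, rfl⟩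
    have h1 : eucNorm (A.mulVec (c • v)) ≤ opNorm2 A := le_csSup hbdd hmem
    have h2 : eucNorm (A.mulVec (c • v)) = c * eucNorm (A.mulVec v) := by
      rw [Matrix.mulVec_smul, eucNorm_smul, abs_of_pos (inv_pos.2 h0)]
    rw [h2] at h1
    calc eucNorm (A.mulVec v) = eucNorm v * (c * eucNorm (A.mulVec v)) := by
          rw [← mul_assoc, mul_inv_cancel₀ (ne_of_gt h0), one_mul]
      _ ≤ eucNorm v * opNorm2 A := mul_le_mul_of_nonneg_left h1 (le_of_lt h0)
      _ = opNorm2 A * eucNorm v := mul_comm _ _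


lemma toReal_pos' {p : ℝ≥0∞} (hp : 1 ≤ p) (hp' : p ≠ ∞) : 0 < p.toReal :=
  lt_of_lt_of_le one_pos (by simpa using ENNReal.toReal_mono hp' hp)

lemma pNorm_top {k : ℕ} (x : Fin k → ℝ) : pNorm ∞ x = ⨆ i, |x i| := if_pos rfl

lemma pNorm_of_ne_top {k : ℕ} {p : ℝ≥0∞} (h : p ≠ ∞) (x : Fin k → ℝ) :
    pNorm p x = (∑ i, |x i| ^ p.toReal) ^ (1 / p.toReal) := if_neg h

lemma pNorm_nonneg {k : ℕ} (p : ℝ≥0∞) (x : Fin k → ℝ) : 0 ≤ pNorm p x := by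
  rcases eq_or_ne p ∞ with h | h
  · rw [h, pNorm_top]
    exact Real.iSup_nonneg fun i => abs_nonneg _
  · rw [pNorm_of_ne_top h]
    exact Real.rpow_nonneg (Finset.sum_nonneg fun i _ => Real.rpow_nonneg (abs_nonneg _) _) _

lemma pNorm_zero {k : ℕ} {p : ℝ≥0∞} (hp : 1 ≤ p) : pNorm p (0 : Fin k → ℝ) = 0 := by
  rcases eq_or_ne p ∞ with h | h
  · rw [h, pNorm_top]; simp
  · have hq : 0 < p.toReal := toReal_pos' hp h
    rw [pNorm_of_ne_top h]
    rw [show (∑ i : Fin k, |(0 : Fin k → ℝ) i| ^ p.toReal) = 0 by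
      simp [Real.zero_rpow (ne_of_gt hq)]]
    exact Real.zero_rpow (by positivity)

lemma pNorm_smul_nonneg {k : ℕ} {p : ℝ≥0∞} (hp : 1 ≤ p) (c : ℝ) (hc : 0 ≤ c)
    (x : Fin k → ℝ) : pNorm p (c • x) = c * pNorm p x := by
  rcases eq_or_ne p ∞ with h | h
  · rw [h, pNorm_top, pNorm_top, Real.mul_iSup_of_nonneg hc]
    congr 1; funext i
    simp [abs_mul, abs_of_nonneg hc]
  · have hq : 0 < p.toReal := toReal_pos' hp h
    rw [pNorm_of_ne_top h, pNorm_of_ne_top h]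
    have hsum : (∑ i, |(c • x) i| ^ p.toReal) = c ^ p.toReal * ∑ i, |x i| ^ p.toReal := by
      rw [Finset.mul_sum]
      apply Finset.sum_congr rfl
      intro i _
      rw [Pi.smul_apply, smul_eq_mul, abs_mul, abs_of_nonneg hc,
        Real.mul_rpow hc (abs_nonneg _)]
    rw [hsum, Real.mul_rpow (by positivity) (Finset.sum_nonneg fun i _ =>
      Real.rpow_nonneg (abs_nonneg _) _)]
    rw [← Real.rpow_mul hc, mul_one_div, div_self (ne_of_gt hq), Real.rpow_one]


lemma taylor_bound {n m : ℕ} (F : (Fin n → ℝ) → (Fin m → ℝ))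
    (J : (Fin n → ℝ) → Matrix (Fin m) (Fin n) ℝ)
    (hJ : ∀ y, HasFDerivAt F (LinearMap.toContinuousLinearMap (Matrix.mulVecLin (J y))) y)
    (LJ : ℝ) (hLJ : 0 ≤ LJ)
    (hLip : ∀ y z v, eucNorm ((J y - J z).mulVec v) ≤ LJ * eucNorm (y - z) * eucNorm v)
    (a d : Fin n → ℝ) :
    eucNorm (F (a + d) - F a - (J a).mulVec d) ≤ LJ / 2 * eucNorm d ^ 2 := by
  set ι := (EuclideanSpace.equiv (Fin m) ℝ).symm with hι
  set g : ℝ → EuclideanSpace ℝ (Fin m) :=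
    fun t => ι (F (a + t • d) - F a - t • (J a).mulVec d) with hg
  set w : ℝ → EuclideanSpace ℝ (Fin m) :=
    fun t => ι ((J (a + t • d) - J a).mulVec d) with hw
  have hderiv : ∀ t : ℝ, HasDerivAt g (w t) t := by
    intro t
    have hline : HasDerivAt (fun t : ℝ => a + t • d) d t := by
      simpa using ((hasDerivAt_id t).smul_const d).const_add a
    have hF : HasDerivAt (fun t : ℝ => F (a + t • d)) ((J (a + t • d)).mulVec d) t := by
      have := (hJ (a + t • d)).comp_hasDerivAt t hline
      simpa [Function.comp_def] using this
    have hsub : HasDerivAt (fun t : ℝ => F (a + t • d) - F a - t • (J a).mulVec d)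
        ((J (a + t • d) - J a).mulVec d) t := by
      have h2 : HasDerivAt (fun t : ℝ => t • (J a).mulVec d) ((J a).mulVec d) t := by
        simpa using (hasDerivAt_id t).smul_const ((J a).mulVec d)
      have := (hF.sub_const (F a)).sub h2
      rw [Matrix.sub_mulVec]; exact this
    exact (ι.toContinuousLinearMap.hasFDerivAt.comp_hasDerivAt t hsub)
  have hwcont : Continuous w := by
    apply LipschitzWith.continuous (K := Real.toNNReal (LJ * eucNorm d ^ 2))
    apply LipschitzWith.of_dist_le_mul
    intro s t
    have h1 : dist (w s) (w t) = eucNorm ((J (a + s • d) - J (a + t • d)).mulVec d) := by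
      rw [dist_eq_norm, hw]
      rw [← map_sub, ← eucNorm_eq_norm]
      congr 1
      rw [← Matrix.sub_mulVec]
      congr 1
      abel
    rw [h1]
    have h2 := hLip (a + s • d) (a + t • d) d
    have h3 : (a + s • d) - (a + t • d) = (s - t) • d := by
      rw [sub_smul]; abel
    rw [h3, eucNorm_smul] at h2
    calc eucNorm ((J (a + s • d) - J (a + t • d)).mulVec d)
        ≤ LJ * (|s - t| * eucNorm d) * eucNorm d := h2
      _ = LJ * eucNorm d ^ 2 * |s - t| := by ring
      _ ≤ Real.toNNReal (LJ * eucNorm d ^ 2) * dist s t := by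
          rw [Real.dist_eq]
          apply mul_le_mul_of_nonneg_right _ (abs_nonneg _)
          exact Real.le_coe_toNNReal _
  have hInt : IntervalIntegrable w MeasureTheory.volume 0 1 :=
    hwcont.intervalIntegrable 0 1
  have key : g 1 - g 0 = ∫ t in (0:ℝ)..1, w t :=
    (intervalIntegral.integral_eq_sub_of_hasDerivAt (fun t _ => hderiv t) hInt).symm
  have hg0 : g 0 = 0 := by simp [hg]
  have hg1 : g 1 = ι (F (a + d) - F a - (J a).mulVec d) := by simp [hg]
  have hbound : ∀ t ∈ Set.Icc (0:ℝ) 1, ‖w t‖ ≤ LJ * eucNorm d ^ 2 * t := by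
    intro t ht
    have h1 : ‖w t‖ = eucNorm ((J (a + t • d) - J a).mulVec d) := by
      rw [hw, ← eucNorm_eq_norm]
    rw [h1]
    have h2 := hLip (a + t • d) a d
    have h3 : (a + t • d) - a = t • d := by abel
    rw [h3, eucNorm_smul, abs_of_nonneg ht.1] at h2
    calc eucNorm ((J (a + t • d) - J a).mulVec d)
        ≤ LJ * (t * eucNorm d) * eucNorm d := h2
      _ = LJ * eucNorm d ^ 2 * t := by ring
  have hnorm : ‖∫ t in (0:ℝ)..1, w t‖ ≤ LJ / 2 * eucNorm d ^ 2 := by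
    calc ‖∫ t in (0:ℝ)..1, w t‖ ≤ ∫ t in (0:ℝ)..1, ‖w t‖ :=
          intervalIntegral.norm_integral_le_integral_norm zero_le_one
      _ ≤ ∫ t in (0:ℝ)..1, LJ * eucNorm d ^ 2 * t := by
          apply intervalIntegral.integral_mono_on zero_le_one
            (hwcont.norm.intervalIntegrable 0 1)
            (by apply Continuous.intervalIntegrable; continuity)
          exact hbound
      _ = LJ * eucNorm d ^ 2 * ((1 ^ 2 - 0 ^ 2) / 2) := by
          rw [intervalIntegral.integral_const_mul, integral_id]
      _ = LJ / 2 * eucNorm d ^ 2 := by ring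
  rw [eucNorm_eq_norm, ← hι, ← hg1]
  calc ‖g 1‖ = ‖g 1 - g 0‖ := by rw [hg0, sub_zero]
    _ = ‖∫ t in (0:ℝ)..1, w t‖ := by rw [key]
    _ ≤ LJ / 2 * eucNorm d ^ 2 := hnorm


lemma eucNorm_neg {k : ℕ} (x : Fin k → ℝ) : eucNorm (-x) = eucNorm x := by
  have := eucNorm_smul (-1 : ℝ) x
  simpa using this

lemma frob_le_of_cols {m n : ℕ} (M : Matrix (Fin m) (Fin n) ℝ) (c : ℝ) (hc : 0 ≤ c)
    (hcol : ∀ j, eucNorm (fun i => M i j) ≤ c) : frob M ≤ Real.sqrt n * c := by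
  rw [frob, Finset.sum_comm]
  have hj : ∀ j : Fin n, ∑ i, M i j ^ 2 ≤ c ^ 2 := by
    intro j
    have h1 := hcol j
    have h2 : eucNorm (fun i => M i j) ^ 2 ≤ c ^ 2 := by
      nlinarith [eucNorm_nonneg (fun i => M i j)]
    rwa [eucNorm, Real.sq_sqrt (by positivity)] at h2
  calc Real.sqrt (∑ j : Fin n, ∑ i, M i j ^ 2)
      ≤ Real.sqrt (∑ _j : Fin n, c ^ 2) :=
        Real.sqrt_le_sqrt (Finset.sum_le_sum fun j _ => hj j)
    _ = Real.sqrt ((n : ℝ) * c ^ 2) := by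
        rw [Finset.sum_const, Finset.card_univ, Fintype.card_fin, nsmul_eq_mul]
    _ = Real.sqrt n * c := by
        rw [Real.sqrt_mul (Nat.cast_nonneg n), Real.sqrt_sq hc]

lemma eucNorm_single {k : ℕ} (j : Fin k) (t : ℝ) (ht : 0 ≤ t) :
    eucNorm (Pi.single j t : Fin k → ℝ) = t := by
  rw [eucNorm]
  have : ∑ i, (Pi.single j t : Fin k → ℝ) i ^ 2 = t ^ 2 := by
    rw [Finset.sum_eq_single j]
    · simp
    · intro b _ hb; simp [Pi.single_apply, hb]
    · intro hj; exact absurd (Finset.mem_univ j) hj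
  rw [this, Real.sqrt_sq ht]

lemma fd_frob_bound {n m : ℕ} (F : (Fin n → ℝ) → (Fin m → ℝ))
    (J : (Fin n → ℝ) → Matrix (Fin m) (Fin n) ℝ)
    (hJ : ∀ y, HasFDerivAt F (LinearMap.toContinuousLinearMap (Matrix.mulVecLin (J y))) y)
    (LJ : ℝ) (hLJ : 0 ≤ LJ)
    (hLip : ∀ y z v, eucNorm ((J y - J z).mulVec v) ≤ LJ * eucNorm (y - z) * eucNorm v)
    (x : Fin n → ℝ) (τ : ℝ) (hτ : 0 < τ) :
    frob (J x - fdMatrix F x τ) ≤ Real.sqrt n * (LJ / 2 * τ) := by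
  apply frob_le_of_cols _ _ (by positivity)
  intro j
  set u : Fin n → ℝ := Pi.single j τ with hu
  have hcol : (fun i => (J x - fdMatrix F x τ) i j)
      = (1 / τ) • (-(F (x + u) - F x - (J x).mulVec u)) := by
    funext i
    simp only [Pi.smul_apply, Matrix.sub_apply, fdMatrix, Matrix.of_apply, hu,
      Matrix.mulVec_single, Pi.neg_apply, Pi.sub_apply, smul_eq_mul]
    field_simp
    rw [op_smul_eq_mul, Matrix.col_apply]; ring
  rw [hcol, eucNorm_smul, eucNorm_neg, abs_of_pos (by positivity : (0:ℝ) < 1 / τ)]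
  have ht := taylor_bound F J hJ LJ hLJ hLip x u
  rw [hu, eucNorm_single j τ hτ.le] at ht
  calc 1 / τ * eucNorm (F (x + u) - F x - (J x).mulVec u)
      ≤ 1 / τ * (LJ / 2 * τ ^ 2) := by
        apply mul_le_mul_of_nonneg_left _ (by positivity)
        rw [hu]; exact ht
    _ = LJ / 2 * τ := by field_simp


section Model
variable {n m : ℕ} (Ω : Set (Fin n → ℝ)) (F : (Fin n → ℝ) → (Fin m → ℝ))
  (h : (Fin m → ℝ) → ℝ) (p : ℝ≥0∞)

/-- The model image set. -/
def mset (A : Matrix (Fin m) (Fin n) ℝ) (x : Fin n → ℝ) (r : ℝ) : Set ℝ :=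
  (fun s => h (F x + A.mulVec s)) '' {s | x + s ∈ Ω ∧ pNorm p s ≤ r}

lemma mset_nonempty (hp : 1 ≤ p) {A : Matrix (Fin m) (Fin n) ℝ} {x : Fin n → ℝ} {r : ℝ}
    (hx : x ∈ Ω) (hr : 0 ≤ r) : (mset Ω F h p A x r).Nonempty :=
  ⟨h (F x + A.mulVec 0), 0, ⟨by simpa using hx, by rw [pNorm_zero hp]; exact hr⟩, rfl⟩

lemma model_lowerBound {Lh cpm cnp : ℝ}
    (hLh : 0 < Lh) (hcpm0 : 0 ≤ cpm) (hcnp0 : 0 ≤ cnp)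
    (hhLip : ∀ z w, |h z - h w| ≤ Lh * pNorm p (z - w))
    (hcpm : ∀ z : Fin m → ℝ, pNorm p z ≤ cpm * eucNorm z)
    (hcnp : ∀ v : Fin n → ℝ, eucNorm v ≤ cnp * pNorm p v)
    (A : Matrix (Fin m) (Fin n) ℝ) (x : Fin n → ℝ) (r : ℝ) (hr : 0 ≤ r) :
    h (F x) - Lh * (cpm * (frob A * (cnp * r))) ∈ lowerBounds (mset Ω F h p A x r) := by
  rintro t ⟨s, ⟨hs1, hs2⟩, rfl⟩
  have h1 : |h (F x + A.mulVec s) - h (F x)| ≤ Lh * pNorm p (A.mulVec s) := by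
    have := hhLip (F x + A.mulVec s) (F x)
    simpa using this
  have h2 : pNorm p (A.mulVec s) ≤ cpm * (frob A * (cnp * r)) := by
    calc pNorm p (A.mulVec s) ≤ cpm * eucNorm (A.mulVec s) := hcpm _
      _ ≤ cpm * (frob A * eucNorm s) :=
          mul_le_mul_of_nonneg_left (eucNorm_mulVec_le_frob A s) hcpm0
      _ ≤ cpm * (frob A * (cnp * pNorm p s)) :=
          mul_le_mul_of_nonneg_left
            (mul_le_mul_of_nonneg_left (hcnp s) (frob_nonneg A)) hcpm0
      _ ≤ cpm * (frob A * (cnp * r)) :=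
          mul_le_mul_of_nonneg_left
            (mul_le_mul_of_nonneg_left
              (mul_le_mul_of_nonneg_left hs2 hcnp0) (frob_nonneg A)) hcpm0
  have h3 : h (F x) - h (F x + A.mulVec s) ≤ Lh * (cpm * (frob A * (cnp * r))) := by
    have := (abs_le.1 h1).1
    nlinarith [mul_le_mul_of_nonneg_left h2 hLh.le]
  linarith

lemma model_bddBelow {Lh cpm cnp : ℝ}
    (hLh : 0 < Lh) (hcpm0 : 0 ≤ cpm) (hcnp0 : 0 ≤ cnp)
    (hhLip : ∀ z w, |h z - h w| ≤ Lh * pNorm p (z - w))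
    (hcpm : ∀ z : Fin m → ℝ, pNorm p z ≤ cpm * eucNorm z)
    (hcnp : ∀ v : Fin n → ℝ, eucNorm v ≤ cnp * pNorm p v)
    (A : Matrix (Fin m) (Fin n) ℝ) (x : Fin n → ℝ) (r : ℝ) (hr : 0 ≤ r) :
    BddBelow (mset Ω F h p A x r) :=
  ⟨_, model_lowerBound Ω F h p hLh hcpm0 hcnp0 hhLip hcpm hcnp A x r hr⟩

lemma sInf_image_le_add {V : Type*} (S : Set V) (hS : S.Nonempty) (f g : V → ℝ) (c : ℝ)
    (hfg : ∀ s ∈ S, f s ≤ g s + c) (hbf : BddBelow (f '' S)) :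
    sInf (f '' S) ≤ sInf (g '' S) + c := by
  have hgne : (g '' S).Nonempty := hS.image g
  refine le_of_forall_pos_le_add ?_
  intro δ hδ
  obtain ⟨b, ⟨s, hs, rfl⟩, hb⟩ := Real.lt_sInf_add_pos hgne hδ
  calc sInf (f '' S) ≤ f s := csInf_le hbf ⟨s, hs, rfl⟩
    _ ≤ g s + c := hfg s hs
    _ ≤ sInf (g '' S) + c + δ := by linarith

lemma model_scale (hΩcv : Convex ℝ Ω) (hconv : ConvexOn ℝ Set.univ h) (hp : 1 ≤ p)
    (A : Matrix (Fin m) (Fin n) ℝ) (x : Fin n → ℝ) (hx : x ∈ Ω)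
    {r R : ℝ} (hr : 0 < r) (hrR : r ≤ R)
    (hbr : BddBelow (mset Ω F h p A x r)) :
    r / R * (h (F x) - sInf (mset Ω F h p A x R)) ≤ h (F x) - sInf (mset Ω F h p A x r) := by
  have hR : 0 < R := lt_of_lt_of_le hr hrR
  set lam := r / R with hlam
  have hlam0 : 0 < lam := div_pos hr hR
  have hlam1 : lam ≤ 1 := (div_le_one hR).2 hrR
  have hne : (mset Ω F h p A x R).Nonempty := mset_nonempty Ω F h p hp hx hR.le
  rw [show r / R * (h (F x) - sInf (mset Ω F h p A x R))
      = h (F x) - ((1 - lam) * h (F x) + lam * sInf (mset Ω F h p A x R)) by ring]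
  refine sub_le_sub_left ?_ _
  refine le_of_forall_pos_le_add ?_
  intro ε hε
  obtain ⟨b, ⟨s, ⟨hs1, hs2⟩, rfl⟩, hb⟩ := Real.lt_sInf_add_pos hne (div_pos hε hlam0)
  have hmem : x + lam • s ∈ Ω := by
    have h1 := hΩcv hx hs1 (by linarith : (0:ℝ) ≤ 1 - lam) hlam0.le (by ring)
    have h2 : (1 - lam) • x + lam • (x + s) = x + lam • s := by module
    rwa [h2] at h1
  have hpn : pNorm p (lam • s) ≤ r := by
    rw [pNorm_smul_nonneg hp lam hlam0.le]
    calc lam * pNorm p s ≤ lam * R := mul_le_mul_of_nonneg_left hs2 hlam0.le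
      _ = r := by rw [hlam]; field_simp
  have hval : h (F x + A.mulVec (lam • s))
      ≤ (1 - lam) * h (F x) + lam * h (F x + A.mulVec s) := by
    have h2 : F x + A.mulVec (lam • s)
        = (1 - lam) • F x + lam • (F x + A.mulVec s) := by
      rw [Matrix.mulVec_smul]
      module
    rw [h2]
    exact hconv.2 (Set.mem_univ _) (Set.mem_univ _)
      (by linarith : (0:ℝ) ≤ 1 - lam) hlam0.le (by ring)
  calc sInf (mset Ω F h p A x r) ≤ h (F x + A.mulVec (lam • s)) :=
        csInf_le hbr ⟨lam • s, ⟨hmem, hpn⟩, rfl⟩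
    _ ≤ (1 - lam) * h (F x) + lam * h (F x + A.mulVec s) := hval
    _ ≤ (1 - lam) * h (F x) + lam * (sInf (mset Ω F h p A x R) + ε / lam) := by
        have := mul_le_mul_of_nonneg_left hb.le hlam0.le
        linarith
    _ = (1 - lam) * h (F x) + lam * sInf (mset Ω F h p A x R) + ε := by
        field_simp
        ring

end Model

end TRFDAux

set_option maxHeartbeats 2000000

/-- Lemma 3.5: bound on the number of iterations of types U¹ and U³. -/
theorem stmt11
    {n m : ℕ} (hn : 1 ≤ n) (hm : 1 ≤ m) (p : ℝ≥0∞) (hp : 1 ≤ p)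
    (Ω : Set (Fin n → ℝ)) (hΩne : Ω.Nonempty) (hΩcl : IsClosed Ω) (hΩcv : Convex ℝ Ω)
    (F : (Fin n → ℝ) → (Fin m → ℝ)) (J : (Fin n → ℝ) → Matrix (Fin m) (Fin n) ℝ)
    (hJ : ∀ y, HasFDerivAt F (LinearMap.toContinuousLinearMap (Matrix.mulVecLin (J y))) y)
    (LJ : ℝ) (hLJ : 0 < LJ)
    (hJLip : ∀ y z, opNorm2 (J y - J z) ≤ LJ * eucNorm (y - z))
    (h : (Fin m → ℝ) → ℝ) (hconv : ConvexOn ℝ Set.univ h)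
    (Lh : ℝ) (hLh : 0 < Lh)
    (hhLip : ∀ z w, |h z - h w| ≤ Lh * pNorm p (z - w))
    (cnp cpm : ℝ) (hcnp1 : 1 ≤ cnp) (hcpm1 : 1 ≤ cpm)
    (hcnp : ∀ v : Fin n → ℝ, eucNorm v ≤ cnp * pNorm p v)
    (hcpm : ∀ z : Fin m → ℝ, pNorm p z ≤ cpm * eucNorm z)
    (ε σ α θ Δstar : ℝ) (hε : 0 < ε) (hσ : 0 < σ)
    (hα0 : 0 < α) (hα1 : α < 1) (hθ0 : 0 < θ) (hθ1 : θ ≤ 1)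
    (x : ℕ → Fin n → ℝ) (τ Δ : ℕ → ℝ) (A : ℕ → Matrix (Fin m) (Fin n) ℝ)
    (d : ℕ → Fin n → ℝ) (ρ : ℕ → ℝ)
    (hrun : TRFDrun Ω F h p Lh cpm cnp ε σ α θ Δstar x τ Δ A d ρ)
    (T : ℕ) (hT2 : 2 ≤ T) (hT : ∀ k < T, ε < psi Ω F h J p Δstar (x k)) :
    (Set.ncard {k : ℕ | k < T ∧
        (eta Ω F h p Δstar (x k) (A k) < ε / 2 ∨
         (ε / 2 ≤ eta Ω F h p Δstar (x k) (A k) ∧ ρ k < α ∧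
          Δ k / 2 < τ k * Real.sqrt n))} : ℤ) ≤
      ⌈|Real.logb 2 (τ 0 * Real.sqrt n /
          ((1 - α) * θ * ε / (4 * Lh * max σ LJ * cpm * cnp ^ 2)))|⌉ := by
  classical
  obtain ⟨hx0, hτ0, hΔ0a, hΔ0b, hA, hstep⟩ := hrun
  have hn1 : (1:ℝ) ≤ (n:ℝ) := by exact_mod_cast hn
  have hsn : 0 < Real.sqrt n := Real.sqrt_pos.2 (by linarith only [hn1])
  have hcnp0 : (0:ℝ) < cnp := lt_of_lt_of_le one_pos hcnp1
  have hcpm0 : (0:ℝ) < cpm := lt_of_lt_of_le one_pos hcpm1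
  have h1α : (0:ℝ) < 1 - α := by linarith only [hα1]
  set M := max σ LJ with hM
  have hσM : σ ≤ M := le_max_left _ _
  have hLJM : LJ ≤ M := le_max_right _ _
  have hMpos : 0 < M := lt_of_lt_of_le hσ hσM
  set Δmin := (1 - α) * θ * ε / (4 * Lh * M * cpm * cnp ^ 2) with hΔmindef
  have hΔmin : 0 < Δmin := div_pos (mul_pos (mul_pos h1α hθ0) hε) (by positivity)
  have hτ0pos : 0 < τ 0 := by rw [hτ0]; apply div_pos hε; positivity
  have hΔstar : 0 < Δstar :=
    lt_of_lt_of_le (by positivity : 0 < τ 0 * Real.sqrt n) (le_trans hΔ0a hΔ0b)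
  have hcnpsq : cnp ≤ cnp ^ 2 := by
    have h := mul_le_mul_of_nonneg_right hcnp1 hcnp0.le
    calc cnp = 1 * cnp := (one_mul cnp).symm
      _ ≤ cnp * cnp := h
      _ = cnp ^ 2 := (sq cnp).symm
  have hLip : ∀ y z v, eucNorm ((J y - J z).mulVec v) ≤ LJ * eucNorm (y - z) * eucNorm v :=
    fun y z v => le_trans (eucNorm_mulVec_le_opNorm2 _ v)
      (mul_le_mul_of_nonneg_right (hJLip y z) (eucNorm_nonneg v))
  -- invariants
  have hinv : ∀ k, x k ∈ Ω ∧ 0 < τ k ∧ τ k * Real.sqrt n ≤ Δ k ∧ Δ k ≤ Δstar := by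
    intro k
    induction k with
    | zero => exact ⟨hx0, hτ0pos, hΔ0a, hΔ0b⟩
    | succ k ih =>
      obtain ⟨hxk, hτk, hτΔ, hΔs⟩ := ih
      have hΔpos : 0 < Δ k := lt_of_lt_of_le (by positivity) hτΔ
      rcases hstep k with ⟨_, hx', hΔ', hτ'⟩ | ⟨hη, hd, hdΩ, hθd, hρdef, hcase⟩
      · rw [hx', hΔ', hτ']
        refine ⟨hxk, by linarith only [hτk], ?_, hΔs⟩
        have he : τ k / 2 * Real.sqrt n = τ k * Real.sqrt n / 2 := by ring
        rw [he]
        linarith only [hτΔ, hΔpos]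
      · rcases hcase with ⟨_, hx', hΔ', hτ'⟩ | ⟨_, hg, hx', hΔ', hτ'⟩ | ⟨_, hg, hx', hΔ', hτ'⟩
        · rw [hx', hΔ', hτ']
          exact ⟨hdΩ, hτk, le_min (by linarith only [hτΔ, hΔpos]) (by linarith only [hτΔ, hΔs]),
            min_le_right _ _⟩
        · rw [hx', hΔ', hτ']
          exact ⟨hxk, hτk, by linarith only [hg], by linarith only [hΔs, hΔpos]⟩
        · rw [hx', hΔ', hτ']
          refine ⟨hxk, by linarith only [hτk], ?_, by linarith only [hΔs, hΔpos]⟩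
          have he : τ k / 2 * Real.sqrt n = τ k * Real.sqrt n / 2 := by ring
          rw [he]
          linarith only [hτΔ]
  set condP : ℕ → Prop := fun k =>
    eta Ω F h p Δstar (x k) (A k) < ε / 2 ∨
      (ε / 2 ≤ eta Ω F h p Δstar (x k) (A k) ∧ ρ k < α ∧
        Δ k / 2 < τ k * Real.sqrt n) with hcondP
  have htau : ∀ k, (condP k ∧ τ (k+1) = τ k / 2) ∨ (¬ condP k ∧ τ (k+1) = τ k) := by
    intro k
    rcases hstep k with ⟨hη, _, _, hτ'⟩ | ⟨hη, hd, hdΩ, hθd, hρdef, hcase⟩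
    · exact Or.inl ⟨Or.inl hη, hτ'⟩
    · rcases hcase with ⟨hρ, _, _, hτ'⟩ | ⟨hρ, hg, _, _, hτ'⟩ | ⟨hρ, hg, _, _, hτ'⟩
      · refine Or.inr ⟨?_, hτ'⟩
        rintro (hc | ⟨_, hc, _⟩) <;> linarith only [hη, hρ, hc]
      · refine Or.inr ⟨?_, hτ'⟩
        rintro (hc | ⟨_, _, hc⟩) <;> linarith only [hη, hg, hc]
      · exact Or.inl ⟨Or.inr ⟨hη, hρ, hg⟩, hτ'⟩
  set cnt : ℕ → ℕ := fun k => ((Finset.range k).filter condP).card with hcnt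
  have htauc : ∀ k, τ k = τ 0 / 2 ^ (cnt k) := by
    intro k
    induction k with
    | zero => simp [hcnt]
    | succ k ih =>
      have hfil : (Finset.range (k+1)).filter condP
          = if condP k then insert k ((Finset.range k).filter condP)
            else (Finset.range k).filter condP := by
        rw [Finset.range_add_one, Finset.filter_insert]
      rcases htau k with ⟨hck, hτ'⟩ | ⟨hck, hτ'⟩
      · rw [hτ', ih]
        have hcc : cnt (k+1) = cnt k + 1 := by
          simp only [hcnt, hfil, if_pos hck]
          rw [Finset.card_insert_of_notMem (by simp)]
        rw [hcc, pow_succ, div_div]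
      · rw [hτ', ih]
        have hcc : cnt (k+1) = cnt k := by simp only [hcnt, hfil, if_neg hck]
        rw [hcc]
  -- key lemma
  have hKL : ∀ k, k < T → condP k → Δmin < τ k * Real.sqrt n := by
    intro k hkT hck
    obtain ⟨hxk, hτk, hτΔ, hΔs⟩ := hinv k
    have hΔpos : 0 < Δ k := lt_of_lt_of_le (by positivity) hτΔ
    have hfrob : frob (J (x k) - A k) ≤ Real.sqrt n * (LJ / 2 * τ k) := by
      rw [hA k]; exact fd_frob_bound F J hJ LJ hLJ.le hLip (x k) (τ k) hτk
    have hfrob0 : 0 ≤ frob (J (x k) - A k) := frob_nonneg _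
    rcases hck with hU1 | ⟨hη, hρα, hU3⟩
    · -- U¹ case
      have hψ2 : ε < Δstar⁻¹ *
          (h (F (x k)) - sInf (mset Ω F h p (J (x k)) (x k) Δstar)) := hT k hkT
      have hη2 : Δstar⁻¹ *
          (h (F (x k)) - sInf (mset Ω F h p (A k) (x k) Δstar)) < ε / 2 := hU1
      have hcomp : sInf (mset Ω F h p (A k) (x k) Δstar)
          ≤ sInf (mset Ω F h p (J (x k)) (x k) Δstar)
            + Lh * (cpm * (frob (J (x k) - A k) * (cnp * Δstar))) := by
        apply sInf_image_le_add {s : Fin n → ℝ | x k + s ∈ Ω ∧ pNorm p s ≤ Δstar}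
          ⟨0, by simpa using hxk, by rw [pNorm_zero hp]; exact hΔstar.le⟩
        · rintro s ⟨hs1, hs2⟩
          have hdiff := hhLip (F (x k) + (A k).mulVec s) (F (x k) + (J (x k)).mulVec s)
          have heq : F (x k) + (A k).mulVec s - (F (x k) + (J (x k)).mulVec s)
              = (A k - J (x k)).mulVec s := by
            rw [Matrix.sub_mulVec]; abel
          rw [heq] at hdiff
          have hpn : pNorm p ((A k - J (x k)).mulVec s)
              ≤ cpm * (frob (J (x k) - A k) * (cnp * Δstar)) := by
            have he1 : eucNorm ((A k - J (x k)).mulVec s)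
                = eucNorm ((J (x k) - A k).mulVec s) := by
              rw [show A k - J (x k) = -(J (x k) - A k) from (neg_sub _ _).symm,
                Matrix.neg_mulVec, eucNorm_neg]
            calc pNorm p ((A k - J (x k)).mulVec s)
                ≤ cpm * eucNorm ((A k - J (x k)).mulVec s) := hcpm _
              _ = cpm * eucNorm ((J (x k) - A k).mulVec s) := by rw [he1]
              _ ≤ cpm * (frob (J (x k) - A k) * eucNorm s) :=
                  mul_le_mul_of_nonneg_left (eucNorm_mulVec_le_frob _ _) hcpm0.le
              _ ≤ cpm * (frob (J (x k) - A k) * (cnp * pNorm p s)) :=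
                  mul_le_mul_of_nonneg_left
                    (mul_le_mul_of_nonneg_left (hcnp s) hfrob0) hcpm0.le
              _ ≤ cpm * (frob (J (x k) - A k) * (cnp * Δstar)) :=
                  mul_le_mul_of_nonneg_left
                    (mul_le_mul_of_nonneg_left
                      (mul_le_mul_of_nonneg_left hs2 hcnp0.le) hfrob0) hcpm0.le
          have habs := (abs_le.1 hdiff).2
          have h2 := mul_le_mul_of_nonneg_left hpn hLh.le
          show h (F (x k) + (A k).mulVec s)
            ≤ h (F (x k) + (J (x k)).mulVec s)
              + Lh * (cpm * (frob (J (x k) - A k) * (cnp * Δstar)))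
          linarith only [habs, h2]
        · exact model_bddBelow Ω F h p hLh hcpm0.le hcnp0.le hhLip hcpm hcnp
            (A k) (x k) Δstar hΔstar.le
      have hψ' : ε * Δstar < h (F (x k)) - sInf (mset Ω F h p (J (x k)) (x k) Δstar) := by
        rw [inv_mul_eq_div, lt_div_iff₀ hΔstar] at hψ2; exact hψ2
      have hη' : h (F (x k)) - sInf (mset Ω F h p (A k) (x k) Δstar) < ε / 2 * Δstar := by
        rw [inv_mul_eq_div, div_lt_iff₀ hΔstar] at hη2; exact hη2
      have hC : ε / 2 * Δstar < Lh * (cpm * (frob (J (x k) - A k) * (cnp * Δstar))) := by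
        linarith only [hψ', hη', hcomp]
      have hfr : ε / 2 < Lh * cpm * cnp * frob (J (x k) - A k) := by
        have h3 : Lh * (cpm * (frob (J (x k) - A k) * (cnp * Δstar)))
            = (Lh * cpm * cnp * frob (J (x k) - A k)) * Δstar := by ring
        rw [h3] at hC
        have h4 : ε / 2 * Δstar = (ε / 2) * Δstar := rfl
        exact (mul_lt_mul_iff_of_pos_right hΔstar).1 hC
      have hfinal : ε < Lh * cpm * cnp * LJ * (τ k * Real.sqrt n) := by
        have h4 := mul_le_mul_of_nonneg_left hfrob (by positivity : (0:ℝ) ≤ Lh * cpm * cnp)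
        have h5 : Lh * cpm * cnp * (Real.sqrt n * (LJ / 2 * τ k))
            = Lh * cpm * cnp * LJ * (τ k * Real.sqrt n) / 2 := by ring
        rw [h5] at h4
        linarith only [hfr, h4]
      have hτsn : 0 < τ k * Real.sqrt n := by positivity
      rw [hΔmindef, div_lt_iff₀ (by positivity : (0:ℝ) < 4 * Lh * M * cpm * cnp ^ 2)]
      have b1 : cnp * LJ ≤ cnp ^ 2 * M := mul_le_mul hcnpsq hLJM hLJ.le (by positivity)
      have b2 : Lh * cpm * (cnp * LJ) ≤ Lh * cpm * (cnp ^ 2 * M) :=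
        mul_le_mul_of_nonneg_left b1 (by positivity)
      have b3 : Lh * cpm * cnp * LJ * (τ k * Real.sqrt n)
          ≤ Lh * cpm * (cnp ^ 2 * M) * (τ k * Real.sqrt n) := by
        apply mul_le_mul_of_nonneg_right _ hτsn.le
        linarith only [b2]
      have hαθ1 : (1 - α) * θ ≤ 1 := by
        calc (1 - α) * θ ≤ 1 * 1 :=
              mul_le_mul (by linarith only [hα0]) hθ1 hθ0.le one_pos.le
          _ = 1 := one_mul 1
      have hαθ : (1 - α) * θ * ε ≤ ε := by
        have := mul_le_mul_of_nonneg_right hαθ1 hε.le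
        linarith only [this]
      have hpos0 : 0 ≤ Lh * cpm * (cnp ^ 2 * M) * (τ k * Real.sqrt n) := by positivity
      linarith only [hαθ, hfinal, b3, hpos0]
    · -- U³ case
      rcases hstep k with ⟨hb1, _, _, _⟩ | ⟨_, hd, hdΩ, hθd, hρdef, _⟩
      · exact absurd hb1 (not_lt.2 hη)
      have hη2 : ε / 2 ≤ Δstar⁻¹ *
          (h (F (x k)) - sInf (mset Ω F h p (A k) (x k) Δstar)) := hη
      have hη' : ε / 2 * Δstar ≤ h (F (x k)) - sInf (mset Ω F h p (A k) (x k) Δstar) := by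
        rw [inv_mul_eq_div, le_div_iff₀ hΔstar] at hη2; exact hη2
      have hbddk : BddBelow (mset Ω F h p (A k) (x k) (Δ k)) :=
        model_bddBelow Ω F h p hLh hcpm0.le hcnp0.le hhLip hcpm hcnp
          (A k) (x k) (Δ k) hΔpos.le
      have hscale := model_scale Ω F h p hΩcv hconv hp (A k) (x k) hxk hΔpos hΔs hbddk
      have hθd2 : θ * (h (F (x k)) - sInf (mset Ω F h p (A k) (x k) (Δ k)))
          ≤ h (F (x k)) - h (F (x k) + (A k).mulVec (d k)) := hθd
      have hmodel : θ * (ε / 2) * Δ k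
          ≤ h (F (x k)) - h (F (x k) + (A k).mulVec (d k)) := by
        have h1 : ε / 2 * Δ k ≤ h (F (x k)) - sInf (mset Ω F h p (A k) (x k) (Δ k)) := by
          have h2 : ε / 2 * Δ k = Δ k / Δstar * (ε / 2 * Δstar) := by
            field_simp
          rw [h2]
          calc Δ k / Δstar * (ε / 2 * Δstar)
              ≤ Δ k / Δstar * (h (F (x k)) - sInf (mset Ω F h p (A k) (x k) Δstar)) :=
                mul_le_mul_of_nonneg_left hη' (by positivity)
            _ ≤ h (F (x k)) - sInf (mset Ω F h p (A k) (x k) (Δ k)) := hscale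
        calc θ * (ε / 2) * Δ k = θ * (ε / 2 * Δ k) := by ring
          _ ≤ θ * (h (F (x k)) - sInf (mset Ω F h p (A k) (x k) (Δ k))) :=
              mul_le_mul_of_nonneg_left h1 hθ0.le
          _ ≤ _ := hθd2
      have hpredpos : 0 < h (F (x k)) - h (F (x k) + (A k).mulVec (d k)) :=
        lt_of_lt_of_le (by positivity) hmodel
      have hactual : h (F (x k)) - h (F (x k + d k))
          = ρ k * (h (F (x k)) - h (F (x k) + (A k).mulVec (d k))) := by
        rw [hρdef, div_mul_cancel₀ _ (ne_of_gt hpredpos)]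
      have hact_lt : h (F (x k)) - h (F (x k + d k))
          < α * (h (F (x k)) - h (F (x k) + (A k).mulVec (d k))) := by
        rw [hactual]
        exact mul_lt_mul_of_pos_right hρα hpredpos
      -- gap bound
      have hd2 : eucNorm (d k) ≤ cnp * Δ k :=
        le_trans (hcnp (d k)) (mul_le_mul_of_nonneg_left hd hcnp0.le)
      have htay := taylor_bound F J hJ LJ hLJ.le hLip (x k) (d k)
      have hJA : eucNorm ((J (x k) - A k).mulVec (d k))
          ≤ Real.sqrt n * (LJ / 2 * τ k) * (cnp * Δ k) :=
        le_trans (eucNorm_mulVec_le_frob _ _)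
          (mul_le_mul hfrob hd2 (eucNorm_nonneg _) (by positivity))
      have hsplit : eucNorm (F (x k + d k) - (F (x k) + (A k).mulVec (d k)))
          ≤ LJ / 2 * (cnp * Δ k) ^ 2 + Real.sqrt n * (LJ / 2 * τ k) * (cnp * Δ k) := by
        have hid : F (x k + d k) - (F (x k) + (A k).mulVec (d k))
            = (F (x k + d k) - F (x k) - (J (x k)).mulVec (d k))
              + (J (x k) - A k).mulVec (d k) := by
          rw [Matrix.sub_mulVec]; abel
        rw [hid]
        refine le_trans (eucNorm_add_le _ _) (add_le_add ?_ hJA)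
        refine le_trans htay ?_
        exact mul_le_mul_of_nonneg_left
          (pow_le_pow_left₀ (eucNorm_nonneg (d k)) hd2 2) (by positivity)
      have hhdiff := hhLip (F (x k + d k)) (F (x k) + (A k).mulVec (d k))
      have hgap : h (F (x k) + (A k).mulVec (d k)) - h (F (x k + d k))
          ≥ -(Lh * cpm * LJ * cnp ^ 2 * Δ k ^ 2) := by
        have hpn2 : pNorm p (F (x k + d k) - (F (x k) + (A k).mulVec (d k)))
            ≤ cpm * (LJ / 2 * (cnp * Δ k) ^ 2 + Real.sqrt n * (LJ / 2 * τ k) * (cnp * Δ k)) :=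
          le_trans (hcpm _) (mul_le_mul_of_nonneg_left hsplit hcpm0.le)
        have hsn2 : Real.sqrt n * (LJ / 2 * τ k) * (cnp * Δ k)
            ≤ LJ / 2 * Δ k * (cnp * Δ k) := by
          apply mul_le_mul_of_nonneg_right _ (by positivity)
          have he : Real.sqrt n * (LJ / 2 * τ k) = LJ / 2 * (τ k * Real.sqrt n) := by ring
          rw [he]
          exact mul_le_mul_of_nonneg_left hτΔ (by positivity)
        have t2b : LJ / 2 * cnp * Δ k ^ 2 ≤ LJ / 2 * cnp ^ 2 * Δ k ^ 2 := by
          have := mul_le_mul_of_nonneg_left hcnpsq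
            (by positivity : (0:ℝ) ≤ LJ / 2 * Δ k ^ 2)
          linarith only [this]
        have hS : LJ / 2 * (cnp * Δ k) ^ 2 + Real.sqrt n * (LJ / 2 * τ k) * (cnp * Δ k)
            ≤ LJ * cnp ^ 2 * Δ k ^ 2 := by
          linarith only [hsn2, t2b]
        have hS2 := mul_le_mul_of_nonneg_left hS hcpm0.le
        have hS3 := mul_le_mul_of_nonneg_left hS2 hLh.le
        have habs := (abs_le.1 hhdiff).2
        have h6 := mul_le_mul_of_nonneg_left hpn2 hLh.le
        linarith only [habs, h6, hS3]
      have k1 := mul_le_mul_of_nonneg_left hmodel h1α.le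
      have hkey : (1 - α) * (θ * (ε / 2) * Δ k) < Lh * cpm * LJ * cnp ^ 2 * Δ k ^ 2 := by
        linarith only [k1, hact_lt, hgap]
      have h8 : (1 - α) * (θ * (ε / 2) * Δ k) < Lh * cpm * M * cnp ^ 2 * Δ k ^ 2 := by
        have h9 : Lh * cpm * LJ * cnp ^ 2 * Δ k ^ 2 ≤ Lh * cpm * M * cnp ^ 2 * Δ k ^ 2 := by
          apply mul_le_mul_of_nonneg_right _ (by positivity)
          apply mul_le_mul_of_nonneg_right _ (by positivity)
          exact mul_le_mul_of_nonneg_left hLJM (by positivity)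
        linarith only [hkey, h9]
      have h8' : (1 - α) * θ * (ε / 2) < Lh * cpm * M * cnp ^ 2 * Δ k := by
        have h10 : ((1 - α) * θ * (ε / 2)) * Δ k < (Lh * cpm * M * cnp ^ 2 * Δ k) * Δ k := by
          have he : (Lh * cpm * M * cnp ^ 2 * Δ k) * Δ k
              = Lh * cpm * M * cnp ^ 2 * Δ k ^ 2 := by ring
          rw [he]
          linarith only [h8]
        exact (mul_lt_mul_iff_of_pos_right hΔpos).1 h10
      have hΔk2 : Δmin < Δ k / 2 := by
        rw [hΔmindef, div_lt_iff₀ (by positivity : (0:ℝ) < 4 * Lh * M * cpm * cnp ^ 2)]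
        linarith only [h8']
      linarith only [hΔk2, hU3]
  -- counting
  have hsetEq : {k : ℕ | k < T ∧
      (eta Ω F h p Δstar (x k) (A k) < ε / 2 ∨
        (ε / 2 ≤ eta Ω F h p Δstar (x k) (A k) ∧ ρ k < α ∧
          Δ k / 2 < τ k * Real.sqrt n))}
      = ↑((Finset.range T).filter condP) := by
    ext j
    simp [hcondP, Finset.mem_filter, Finset.mem_range]
  rw [hsetEq, Set.ncard_coe_finset]
  rcases Nat.eq_zero_or_pos ((Finset.range T).filter condP).card with hN0 | hNpos
  · rw [hN0]
    exact_mod_cast Int.ceil_nonneg (abs_nonneg _)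
  · have hne : ((Finset.range T).filter condP).Nonempty := Finset.card_pos.1 hNpos
    set kstar := ((Finset.range T).filter condP).max' hne with hkstar
    have hkmem := ((Finset.range T).filter condP).max'_mem hne
    rw [← hkstar] at hkmem
    have hkT : kstar < T := Finset.mem_range.1 (Finset.mem_filter.1 hkmem).1
    have hkP : condP kstar := (Finset.mem_filter.1 hkmem).2
    have hfilEq : (Finset.range T).filter condP
        = insert kstar ((Finset.range kstar).filter condP) := by
      ext j
      simp only [Finset.mem_filter, Finset.mem_range, Finset.mem_insert]
      constructor
      · rintro ⟨hjT, hjP⟩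
        rcases eq_or_lt_of_le (Finset.le_max' _ j (Finset.mem_filter.2
          ⟨Finset.mem_range.2 hjT, hjP⟩)) with he | hl
        · exact Or.inl he
        · exact Or.inr ⟨hl, hjP⟩
      · rintro (rfl | ⟨hj, hjP⟩)
        · exact ⟨hkT, hkP⟩
        · exact ⟨lt_trans hj hkT, hjP⟩
    have hcard : ((Finset.range T).filter condP).card = cnt kstar + 1 := by
      rw [hfilEq, Finset.card_insert_of_notMem (by simp)]
    have hKLk := hKL kstar hkT hkP
    rw [htauc kstar] at hKLk
    have hpow : (2:ℝ) ^ (cnt kstar) < τ 0 * Real.sqrt n / Δmin := by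
      rw [lt_div_iff₀ hΔmin]
      have h1 : τ 0 / 2 ^ (cnt kstar) * Real.sqrt n
          = τ 0 * Real.sqrt n / 2 ^ (cnt kstar) := by ring
      rw [h1, lt_div_iff₀ (by positivity : (0:ℝ) < 2 ^ (cnt kstar))] at hKLk
      linarith only [hKLk]
    have hR1 : 1 < τ 0 * Real.sqrt n / Δmin :=
      lt_of_le_of_lt (one_le_pow₀ one_le_two) hpow
    have hlog : (cnt kstar : ℝ) < Real.logb 2 (τ 0 * Real.sqrt n / Δmin) := by
      have h2 := Real.logb_lt_logb (b := 2) one_lt_two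
        (by positivity : (0:ℝ) < 2 ^ (cnt kstar)) hpow
      rwa [show Real.logb 2 ((2:ℝ) ^ (cnt kstar)) = (cnt kstar : ℝ) from by
        rw [← Real.rpow_natCast 2 (cnt kstar), Real.logb_rpow (by norm_num) (by norm_num)]] at h2
    have habs : |Real.logb 2 (τ 0 * Real.sqrt n / Δmin)|
        = Real.logb 2 (τ 0 * Real.sqrt n / Δmin) :=
      abs_of_pos (Real.logb_pos one_lt_two hR1)
    rw [habs, hcard]
    have h3 : (cnt kstar : ℤ) < ⌈Real.logb 2 (τ 0 * Real.sqrt n / Δmin)⌉ :=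
      Int.lt_ceil.2 (by exact_mod_cast hlog)
    push_cast
    omega
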